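/- Let C be a Hom-finite, Krull–Schmidt, k-linear triangulated category, (X,Y) a cluster tilting torsion pair in C (i.e. a torsion pair with Y = X[1]), and D a subcategory satisfying condition (RF) with D ⊆ X ⊆ (D[-1])⊥. Then the D-mutation (μ⁻¹(X;D), μ⁻¹(Y;D[1])) is again a cluster tilting torsion pair, i.e. μ⁻¹(Y;D[1]) = μ⁻¹(X;D)[1]. -/

import Mathlib

open CategoryTheory CategoryTheory.Limits CategoryTheory.Pretriangulated

variable {C : Type*} [Category C] [Preadditive C] [HasZeroObject C]
  [HasShift C ℤ] [∀ n : ℤ, (shiftFunctor C n).Additive] [Pretriangulated C]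

/-- `Hom(𝒳, 𝒴) = 0`. -/
def homZero (𝒳 𝒴 : Set C) : Prop :=
  ∀ ⦃A B : C⦄, A ∈ 𝒳 → B ∈ 𝒴 → ∀ f : A ⟶ B, f = 0

/-- The shift `𝒳[n]` of a subcategory (closed under isomorphisms). -/
def shiftSet (𝒳 : Set C) (n : ℤ) : Set C :=
  {Z | ∃ A ∈ 𝒳, Nonempty ((A⟦n⟧) ≅ Z)}

/-- The class `𝒳 * 𝒴` of extensions. -/
def extClass (𝒳 𝒴 : Set C) : Set C :=
  {Z | ∃ (A B : C) (f : A ⟶ Z) (g : Z ⟶ B) (h : B ⟶ A⟦(1:ℤ)⟧),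
      A ∈ 𝒳 ∧ B ∈ 𝒴 ∧ Triangle.mk f g h ∈ distTriang C}

/-- A torsion pair: `Hom(𝒳,𝒴) = 0` and `C = 𝒳 * 𝒴`. -/
def IsTorsionPair (𝒳 𝒴 : Set C) : Prop :=
  homZero 𝒳 𝒴 ∧ ∀ Z : C, Z ∈ extClass 𝒳 𝒴

/-- A cotorsion pair: `Hom(𝒳,𝒲[1]) = 0` and `C = 𝒳 * 𝒲[1]`. -/
def IsCotorsionPair (𝒳 𝒲 : Set C) : Prop :=
  IsTorsionPair 𝒳 (shiftSet 𝒲 (1:ℤ))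

/-- Full subcategory closed under isomorphisms, finite direct sums and direct summands. -/
structure IsSubcat (𝒳 : Set C) : Prop where
  mem_of_iso : ∀ ⦃A B : C⦄, (A ≅ B) → A ∈ 𝒳 → B ∈ 𝒳
  biprod_mem : ∀ ⦃A B : C⦄, A ∈ 𝒳 → B ∈ 𝒳 → (A ⊞ B) ∈ 𝒳
  mem_of_biprod : ∀ ⦃A B : C⦄, (A ⊞ B) ∈ 𝒳 → A ∈ 𝒳 ∧ B ∈ 𝒳

/-- `⊥(𝒟[1]) = {M : Hom(M, 𝒟[1]) = 0}`. -/
def leftPerpShift (𝒟 : Set C) : Set C :=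
  {M : C | ∀ D ∈ 𝒟, ∀ f : M ⟶ (D⟦(1:ℤ)⟧), f = 0}

/-- `(𝒟[-1])⊥ = {M : Hom(𝒟[-1], M) = 0}`. -/
def shiftRightPerp (𝒟 : Set C) : Set C :=
  {M : C | ∀ D ∈ 𝒟, ∀ f : (D⟦(-1:ℤ)⟧) ⟶ M, f = 0}

/-- `A` admits a left `𝒟`-approximation. -/
def HasLeftApprox (𝒟 : Set C) (A : C) : Prop :=
  ∃ D ∈ 𝒟, ∃ f : A ⟶ D, ∀ D' ∈ 𝒟, ∀ g : A ⟶ D', ∃ h : D ⟶ D', f ≫ h = g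

/-- `A` admits a right `𝒟`-approximation. -/
def HasRightApprox (𝒟 : Set C) (A : C) : Prop :=
  ∃ D ∈ 𝒟, ∃ f : D ⟶ A, ∀ D' ∈ 𝒟, ∀ g : D' ⟶ A, ∃ h : D' ⟶ D, h ≫ f = g

/-- `μ⁻¹(ℳ;𝒟) = (𝒟 * ℳ[1]) ∩ ⊥(𝒟[1])`. -/
def muInv (ℳ 𝒟 : Set C) : Set C :=
  extClass 𝒟 (shiftSet ℳ (1:ℤ)) ∩ leftPerpShift 𝒟

/-- `μ(𝒩;𝒟) = (𝒩[-1] * 𝒟) ∩ (𝒟[-1])⊥`. -/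
def mu (𝒩 𝒟 : Set C) : Set C :=
  extClass (shiftSet 𝒩 (-1:ℤ)) 𝒟 ∩ shiftRightPerp 𝒟

/-- `(ℳ,𝒩)` is a `𝒟`-mutation pair. -/
def IsMutationPair (ℳ 𝒩 𝒟 : Set C) : Prop :=
  ℳ = mu 𝒩 𝒟 ∧ 𝒩 = muInv ℳ 𝒟

/-- Condition (RF): `𝒟` is functorially finite, rigid and `⊥(𝒟[1]) = (𝒟[-1])⊥`. -/
def RF (𝒟 : Set C) : Prop :=
  (∀ A : C, HasLeftApprox 𝒟 A) ∧ (∀ A : C, HasRightApprox 𝒟 A) ∧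
    homZero 𝒟 (shiftSet 𝒟 (1:ℤ)) ∧ leftPerpShift 𝒟 = shiftRightPerp 𝒟

/-- The Ext-injective objects of `𝒳`. -/
def extInj (𝒳 : Set C) : Set C :=
  {T : C | T ∈ 𝒳 ∧ ∀ A ∈ 𝒳, ∀ f : A ⟶ (T⟦(1:ℤ)⟧), f = 0}

/-- The Ext-projective objects of `𝒴`. -/
def extProj (𝒴 : Set C) : Set C :=
  {T : C | T ∈ 𝒴 ∧ ∀ B ∈ 𝒴, ∀ f : T ⟶ (B⟦(1:ℤ)⟧), f = 0}

section Helpers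
set_option linter.unusedSectionVars false

/-- De-shifting a perpendicularity condition. -/
lemma deshift_perp' {𝒟 : Set C} {Z : C} (hZ : Z ∈ leftPerpShift (shiftSet 𝒟 (1:ℤ))) :
    (Z⟦(-1:ℤ)⟧) ∈ leftPerpShift 𝒟 := by
  intro D₀ hD₀ f
  have h2 : (shiftFunctorCompIsoId C (-1:ℤ) (1:ℤ) (by omega)).inv.app Z ≫ f⟦(1:ℤ)⟧' = 0 :=
    hZ _ ⟨D₀, hD₀, ⟨Iso.refl _⟩⟩ _
  have h3 : f⟦(1:ℤ)⟧' = 0 := by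
    have := congrArg (fun g => (shiftFunctorCompIsoId C (-1:ℤ) (1:ℤ) (by omega)).hom.app Z ≫ g) h2
    simpa using this
  rwa [Functor.map_eq_zero_iff] at h3

/-- Re-shifting a perpendicularity condition. -/
lemma reshift_perp' {𝒟 : Set C} {M Z : C} (hM : M ∈ leftPerpShift 𝒟) (ι : (M⟦(1:ℤ)⟧) ≅ Z) :
    Z ∈ leftPerpShift (shiftSet 𝒟 (1:ℤ)) := by
  rintro D'' ⟨D₀, hD₀, ⟨e⟩⟩ f
  obtain ⟨v, hv⟩ := (shiftFunctor C (1:ℤ)).map_surjective (ι.hom ≫ f ≫ (e.inv)⟦(1:ℤ)⟧')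
  have hv0 : v = 0 := hM D₀ hD₀ v
  rw [hv0, Functor.map_zero] at hv
  have h1 : f ≫ (e.inv)⟦(1:ℤ)⟧' = 0 := by
    have := congrArg (fun g => ι.inv ≫ g) hv.symm
    simpa using this
  have h2 : f ≫ (e.inv)⟦(1:ℤ)⟧' = 0 ≫ (e.inv)⟦(1:ℤ)⟧' := by simpa using h1
  exact (cancel_mono _).mp h2

/-- Maps from `𝒟` into `⊥((𝒟[1])[1])` vanish, using the (RF) perpendicular equality. -/
lemma hom_D_to_W_eq_zero' {𝒟 : Set C}
    (hperp : leftPerpShift 𝒟 = shiftRightPerp 𝒟)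
    {D' W : C} (hD' : D' ∈ 𝒟) (hW : W ∈ leftPerpShift (shiftSet 𝒟 (1:ℤ)))
    (φ : D' ⟶ W) : φ = 0 := by
  have h1 : (W⟦(-1:ℤ)⟧) ∈ leftPerpShift 𝒟 := deshift_perp' hW
  rw [hperp] at h1
  have h2 : φ⟦(-1:ℤ)⟧' = 0 := h1 D' hD' _
  rwa [Functor.map_eq_zero_iff] at h2

end Helpers

section Main

variable {𝒳 𝒴 𝒟 : Set C}

/-- Compatibility of mutation with shift (the second half of the statement). -/
lemma muInv_shift_eq (hD : IsSubcat 𝒟)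
    (hct : 𝒴 = shiftSet 𝒳 (1:ℤ)) :
    muInv 𝒴 (shiftSet 𝒟 (1:ℤ)) = shiftSet (muInv 𝒳 𝒟) (1:ℤ) := by
  ext Z
  constructor
  · rintro ⟨⟨A₂, B₂, f₂, g₂, h₂, hA₂, hB₂, hT₂⟩, hZp⟩
    refine ⟨Z⟦(-1:ℤ)⟧, ⟨?_, deshift_perp' hZp⟩,
      ⟨(shiftFunctorCompIsoId C (-1:ℤ) (1:ℤ) (by omega)).app Z⟩⟩
    have hT' := inv_rot_of_distTriang _ (inv_rot_of_distTriang _ (inv_rot_of_distTriang _ hT₂))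
    refine ⟨A₂⟦(-1:ℤ)⟧, B₂⟦(-1:ℤ)⟧, _, _, _, ?_, ?_, hT'⟩
    · obtain ⟨D₂, hD₂, ⟨e⟩⟩ := hA₂
      exact hD.mem_of_iso
        (((shiftFunctorCompIsoId C (1:ℤ) (-1:ℤ) (by omega)).app D₂).symm ≪≫
          (shiftFunctor C (-1:ℤ)).mapIso e) hD₂
    · obtain ⟨Y₂, hY₂, ⟨e'⟩⟩ := hB₂
      rw [hct] at hY₂
      obtain ⟨X₂, hX₂, ⟨e''⟩⟩ := hY₂
      exact ⟨X₂, hX₂, ⟨e'' ≪≫ ((shiftFunctorCompIsoId C (1:ℤ) (-1:ℤ) (by omega)).app Y₂).symm ≪≫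
        (shiftFunctor C (-1:ℤ)).mapIso e'⟩⟩
  · rintro ⟨M, ⟨⟨D₁, B₁, f₁, g₁, h₁, hD₁, hB₁, hT₁⟩, hMp⟩, ⟨ι⟩⟩
    constructor
    · have hT' := rot_of_distTriang _ (rot_of_distTriang _ (rot_of_distTriang _ hT₁))
      set T' := ((Triangle.mk f₁ g₁ h₁).rotate.rotate.rotate) with hT'def
      refine ⟨D₁⟦(1:ℤ)⟧, B₁⟦(1:ℤ)⟧, T'.mor₁ ≫ ι.hom, ι.inv ≫ T'.mor₂, T'.mor₃,
        ⟨D₁, hD₁, ⟨Iso.refl _⟩⟩, ⟨B₁, by rw [hct]; exact hB₁, ⟨Iso.refl _⟩⟩, ?_⟩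
      refine isomorphic_distinguished _ hT' _ ?_
      exact Triangle.isoMk _ _ (Iso.refl _) ι.symm (Iso.refl _)
        (by change (T'.mor₁ ≫ ι.hom) ≫ ι.inv = 𝟙 _ ≫ T'.mor₁; exact (Category.assoc _ _ _).trans ((whisker_eq T'.mor₁ ι.hom_inv_id).trans ((Category.comp_id _).trans (Category.id_comp _).symm)))
        (by change (ι.inv ≫ T'.mor₂) ≫ 𝟙 _ = ι.inv ≫ T'.mor₂; simp)
        (by change T'.mor₃ ≫ (𝟙 T'.obj₁)⟦(1:ℤ)⟧' = 𝟙 _ ≫ T'.mor₃; simp)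
    · exact reshift_perp' hMp ι

/-- `Hom(μ⁻¹𝒳, μ⁻¹𝒴) = 0`, i.e. rigidity of the mutated pair. -/
lemma homZero_muInv (hpair1 : homZero 𝒳 𝒴)
    (hperp : leftPerpShift 𝒟 = shiftRightPerp 𝒟) :
    homZero (muInv 𝒳 𝒟) (muInv 𝒴 (shiftSet 𝒟 (1:ℤ))) := by
  rintro M W ⟨⟨D₁, B₁, f₁, g₁, h₁, hD₁, hB₁, hT₁⟩, hMp⟩
    ⟨⟨A₂, B₂, f₂, g₂, h₂, hA₂, hB₂, hT₂⟩, hWp⟩ φ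
  have s1 : f₁ ≫ φ = 0 := hom_D_to_W_eq_zero' hperp hD₁ hWp _
  obtain ⟨u, hu⟩ : ∃ u : B₁ ⟶ W, φ = g₁ ≫ u := Triangle.yoneda_exact₂ _ hT₁ φ s1
  obtain ⟨X₁, hX₁, ⟨e₁⟩⟩ := hB₁
  set u' : (X₁⟦(1:ℤ)⟧) ⟶ W := e₁.hom ≫ u with hu'
  obtain ⟨Y₂, hY₂, ⟨e₂⟩⟩ := hB₂
  obtain ⟨v₀, hv₀⟩ := (shiftFunctor C (1:ℤ)).map_surjective (u' ≫ g₂ ≫ e₂.inv)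
  have hv00 : v₀ = 0 := hpair1 hX₁ hY₂ v₀
  rw [hv00, Functor.map_zero] at hv₀
  have s4 : u' ≫ g₂ = 0 := by
    have : (u' ≫ g₂ ≫ e₂.inv) ≫ e₂.hom = 0 := by rw [← hv₀]; simp
    simpa using this
  obtain ⟨w, hw⟩ : ∃ w : X₁⟦(1:ℤ)⟧ ⟶ A₂, u' = w ≫ f₂ := Triangle.coyoneda_exact₂ _ hT₂ u' s4
  have hw' : u' = w ≫ f₂ := hw
  obtain ⟨D₂, hD₂, ⟨e₃⟩⟩ := hA₂
  have s7 : g₁ ≫ e₁.inv ≫ w ≫ e₃.inv = 0 := hMp D₂ hD₂ _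
  calc φ = g₁ ≫ u := hu
    _ = g₁ ≫ e₁.inv ≫ u' := by rw [hu']; simp
    _ = g₁ ≫ e₁.inv ≫ w ≫ f₂ := by rw [hw']
    _ = (g₁ ≫ e₁.inv ≫ w ≫ e₃.inv) ≫ e₃.hom ≫ f₂ := by simp
    _ = 0 := by rw [s7]; simp

end Main


section Membership
open ZeroObject
set_option linter.unusedSectionVars false
variable {𝒳 𝒴 𝒟 : Set C}

/-- `0 ∈ 𝒳` whenever `𝒳` is a nonempty subcategory. -/
lemma zero_mem_subcat (hX : IsSubcat 𝒳) {A : C} (hA : A ∈ 𝒳) : (0 : C) ∈ 𝒳 := by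
  have e : A ≅ A ⊞ (0 : C) := Limits.isoBiprodZero (isZero_zero C)
  exact (hX.mem_of_biprod (hX.mem_of_iso e hA)).2

/-- The zero object belongs to `𝒳[1]`. -/
lemma zero_mem_shiftSet (hX : IsSubcat 𝒳) {A : C} (hA : A ∈ 𝒳) :
    (0 : C) ∈ shiftSet 𝒳 (1:ℤ) := by
  refine ⟨0, zero_mem_subcat hX hA, ⟨?_⟩⟩
  exact (Functor.map_isZero _ (isZero_zero C)).isoZero

/-- `𝒟 ⊆ μ⁻¹(𝒳;𝒟)`. -/
lemma D_subset_muInv (hX : IsSubcat 𝒳)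
    (hrig : homZero 𝒟 (shiftSet 𝒟 (1:ℤ))) (hDX : 𝒟 ⊆ 𝒳) {D' : C} (hD' : D' ∈ 𝒟) :
    D' ∈ muInv 𝒳 𝒟 := by
  constructor
  · exact ⟨D', 0, 𝟙 D', 0, 0, hD', zero_mem_shiftSet hX (hDX hD'),
      contractible_distinguished D'⟩
  · intro D₂ hD₂ f
    exact hrig hD' ⟨D₂, hD₂, ⟨Iso.refl _⟩⟩ f

/-- `Q` is the cone of a (weak) left `𝒟`-approximation of an object of `𝒳`. -/
def IsApproxCone (𝒳 𝒟 : Set C) (Q : C) : Prop :=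
  ∃ (X' D' : C) (a' : X' ⟶ D') (b' : D' ⟶ Q) (c' : Q ⟶ (X'⟦(1:ℤ)⟧)),
    X' ∈ 𝒳 ∧ D' ∈ 𝒟 ∧ (∀ D'' ∈ 𝒟, ∀ g : X' ⟶ D'', ∃ h : D' ⟶ D'', a' ≫ h = g) ∧
      Triangle.mk a' b' c' ∈ distTriang C

/-- Cones of left `𝒟`-approximations of objects of `𝒳` lie in `μ⁻¹(𝒳;𝒟)`. -/
lemma approxCone_mem_muInv (hrig : homZero 𝒟 (shiftSet 𝒟 (1:ℤ)))
    {Q : C} (hQ : IsApproxCone 𝒳 𝒟 Q) : Q ∈ muInv 𝒳 𝒟 := by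
  obtain ⟨X', D', a', b', c', hX', hD', happrox, hT⟩ := hQ
  constructor
  · exact ⟨D', X'⟦(1:ℤ)⟧, _, _, _, hD', ⟨X', hX', ⟨Iso.refl _⟩⟩,
      rot_of_distTriang _ hT⟩
  · intro D₂ hD₂ f
    have h1 : b' ≫ f = 0 := hrig hD' ⟨D₂, hD₂, ⟨Iso.refl _⟩⟩ _
    obtain ⟨g, hg⟩ : ∃ g : X'⟦(1:ℤ)⟧ ⟶ D₂⟦(1:ℤ)⟧, f = c' ≫ g := Triangle.yoneda_exact₂ _ (rot_of_distTriang _ hT) f h1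
    obtain ⟨g₀, hg₀⟩ := (shiftFunctor C (1:ℤ)).map_surjective g
    obtain ⟨h, hh⟩ := happrox D₂ hD₂ g₀
    have hz : c' ≫ (a')⟦(1:ℤ)⟧' = 0 := by
      have := comp_distTriang_mor_zero₂₃ _ (rot_of_distTriang _ hT)
      change c' ≫ (-((a')⟦(1:ℤ)⟧')) = 0 at this
      simpa using this
    calc f = c' ≫ g := hg
      _ = c' ≫ (g₀)⟦(1:ℤ)⟧' := by rw [hg₀]
      _ = c' ≫ ((a' ≫ h))⟦(1:ℤ)⟧' := by rw [hh]
      _ = (c' ≫ (a')⟦(1:ℤ)⟧') ≫ (h)⟦(1:ℤ)⟧' := by rw [Functor.map_comp]; simp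
      _ = 0 := by rw [hz]; simp

end Membership

section Extension
set_option linter.unusedSectionVars false
variable {𝒳 𝒴 𝒟 : Set C}

/-- The main construction: every object fits into a triangle with first term in
`μ⁻¹(𝒳;𝒟)` and third term in `μ⁻¹(𝒴;𝒟[1])`. -/
lemma ext_muInv (hX : IsSubcat 𝒳) (hY : IsSubcat 𝒴) (hD : IsSubcat 𝒟)
    (hpair : IsTorsionPair 𝒳 𝒴) (hct : 𝒴 = shiftSet 𝒳 (1:ℤ))
    (hla : ∀ A : C, HasLeftApprox 𝒟 A) (hra : ∀ A : C, HasRightApprox 𝒟 A)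
    (hrig : homZero 𝒟 (shiftSet 𝒟 (1:ℤ))) (hperp : leftPerpShift 𝒟 = shiftRightPerp 𝒟)
    (hDX : 𝒟 ⊆ 𝒳) (hXD : 𝒳 ⊆ shiftRightPerp 𝒟) (Z : C) :
    Z ∈ extClass (muInv 𝒳 𝒟) (muInv 𝒴 (shiftSet 𝒟 (1:ℤ))) := by
  have hXperp : ∀ {X' : C}, X' ∈ 𝒳 → X' ∈ leftPerpShift 𝒟 := by
    intro X' hX'; rw [hperp]; exact hXD hX'
  have hQN : ∀ Q : C, (Q ∈ 𝒟 ∨ IsApproxCone 𝒳 𝒟 Q) → Q ∈ muInv 𝒳 𝒟 := by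
    rintro Q (hQD | hQC)
    · exact D_subset_muInv hX hrig hDX hQD
    · exact approxCone_mem_muInv hrig hQC
  -- (1) right 𝒟-approximation of Z and its fiber K
  obtain ⟨D_Z, hD_Z, ρ, hρ⟩ := hra Z
  obtain ⟨K, ι, σ, hTK⟩ := distinguished_cocone_triangle₁ ρ
  -- (2) torsion triangle of K
  obtain ⟨X_K, Y_K, x_K, y_K, γ_K, hX_K, hY_K, hTtor⟩ := hpair.2 K
  -- (3) the weak approximation of X_K
  obtain ⟨Dstar, hDstar, astar, hastar⟩ := hla X_K
  set φ : X_K ⟶ D_Z := x_K ≫ ι with hφ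
  set Atil : X_K ⟶ Dstar ⊞ D_Z := biprod.lift astar φ with hAtil
  have hDD : (Dstar ⊞ D_Z) ∈ 𝒟 := hD.biprod_mem hDstar hD_Z
  have hAtilapprox : ∀ D'' ∈ 𝒟, ∀ g : X_K ⟶ D'', ∃ h : (Dstar ⊞ D_Z) ⟶ D'', Atil ≫ h = g := by
    intro D'' hD'' g
    obtain ⟨h, hh⟩ := hastar D'' hD'' g
    exact ⟨biprod.fst ≫ h, by rw [hAtil, ← Category.assoc, biprod.lift_fst, hh]⟩
  -- (4) M := cone(Atil)
  obtain ⟨M, btil, ctil, hTM⟩ := distinguished_cocone_triangle Atil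
  have hM : M ∈ muInv 𝒳 𝒟 :=
    approxCone_mem_muInv hrig ⟨X_K, Dstar ⊞ D_Z, Atil, btil, ctil, hX_K, hDD, hAtilapprox, hTM⟩
  -- (5) the map m : M ⟶ Z
  obtain ⟨m, hm₁, hm₂⟩ : ∃ m : M ⟶ Z, btil ≫ m = biprod.snd ≫ ρ ∧
      ctil ≫ (x_K)⟦(1:ℤ)⟧' = m ≫ σ :=
    complete_distinguished_triangle_morphism
      (Triangle.mk Atil btil ctil) (Triangle.mk ι ρ σ) hTM hTK x_K biprod.snd
      (by change Atil ≫ biprod.snd = x_K ≫ ι; rw [hAtil, biprod.lift_snd, hφ])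
  -- (6) covering property of m
  have hcover : ∀ Q : C, (Q ∈ 𝒟 ∨ IsApproxCone 𝒳 𝒟 Q) → ∀ f₁ : Q ⟶ Z,
      ∃ v₀ : Q ⟶ M, f₁ = v₀ ≫ m := by
    rintro Q (hQD | hQC) f₁
    · obtain ⟨t, ht⟩ := hρ Q hQD f₁
      refine ⟨t ≫ biprod.inr ≫ btil, ?_⟩
      simp only [Category.assoc, hm₁, biprod.inr_snd_assoc]
      exact ht.symm
    · obtain ⟨X'', D'', a'', b'', c'', hX'', hD'', happx, hT''⟩ := hQC
      obtain ⟨t, ht⟩ := hρ D'' hD'' (b'' ≫ f₁)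
      obtain ⟨θ, hθ₁, hθ₂⟩ : ∃ θ : X''⟦(1:ℤ)⟧ ⟶ K⟦(1:ℤ)⟧, c'' ≫ θ = f₁ ≫ σ ∧
          (-((a'')⟦(1:ℤ)⟧')) ≫ (t)⟦(1:ℤ)⟧' = θ ≫ (-((ι)⟦(1:ℤ)⟧')) :=
        complete_distinguished_triangle_morphism
        (Triangle.mk a'' b'' c'').rotate (Triangle.mk ι ρ σ).rotate
        (rot_of_distTriang _ hT'') (rot_of_distTriang _ hTK) t f₁ (by change b'' ≫ f₁ = t ≫ ρ; rw [ht])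
      change c'' ≫ θ = f₁ ≫ σ at hθ₁
      -- hθ₁ : c'' ≫ θ = f₁ ≫ σ
      obtain ⟨f₀, hf₀⟩ : ∃ f₀ : X'' ⟶ K, (f₀)⟦(1:ℤ)⟧' = θ := (shiftFunctor C (1:ℤ)).map_surjective θ
      have hfy : f₀ ≫ y_K = 0 := hpair.1 hX'' hY_K _
      obtain ⟨u, hu⟩ : ∃ u : X'' ⟶ X_K, f₀ = u ≫ x_K := Triangle.coyoneda_exact₂ _ hTtor f₀ hfy
      change f₀ = u ≫ x_K at hu
      obtain ⟨w₁, hw₁⟩ := happx Dstar hDstar (u ≫ astar)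
      obtain ⟨w₂, hw₂⟩ := happx D_Z hD_Z (u ≫ φ)
      have hUA : u ≫ Atil = a'' ≫ biprod.lift w₁ w₂ := by
        rw [hAtil]
        apply biprod.hom_ext
        · simp only [Category.assoc, biprod.lift_fst]; exact hw₁.symm
        · simp only [Category.assoc, biprod.lift_snd]; exact hw₂.symm
      have hca : c'' ≫ (a'')⟦(1:ℤ)⟧' = 0 := by
        have := comp_distTriang_mor_zero₂₃ _ (rot_of_distTriang _ hT'')
        change c'' ≫ (-((a'')⟦(1:ℤ)⟧')) = 0 at this
        simpa using this
      have hvz : (c'' ≫ (u)⟦(1:ℤ)⟧') ≫ (Triangle.mk Atil btil ctil).rotate.mor₃ = 0 := by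
        change (c'' ≫ (u)⟦(1:ℤ)⟧') ≫ (-((Atil)⟦(1:ℤ)⟧')) = 0
        rw [Preadditive.comp_neg, Category.assoc, ← Functor.map_comp, hUA, Functor.map_comp,
          ← Category.assoc, hca, zero_comp, neg_zero]
      obtain ⟨v', hv'⟩ : ∃ v' : Q ⟶ M, c'' ≫ (u)⟦(1:ℤ)⟧' = v' ≫ ctil :=
        Triangle.coyoneda_exact₃ _ (rot_of_distTriang _ hTM) (c'' ≫ (u)⟦(1:ℤ)⟧') hvz
      have hdiff : (f₁ - v' ≫ m : Q ⟶ Z) ≫ σ = 0 := by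
        rw [Preadditive.sub_comp, Category.assoc, ← hm₂, ← hθ₁, ← hf₀, hu, Functor.map_comp,
          ← Category.assoc, hv']
        simp [Category.assoc]
      obtain ⟨t', ht'⟩ : ∃ t' : Q ⟶ D_Z, f₁ - v' ≫ m = t' ≫ ρ :=
        Triangle.coyoneda_exact₃ _ hTK (f₁ - v' ≫ m) hdiff
      refine ⟨v' + t' ≫ biprod.inr ≫ btil, ?_⟩
      have h2 : (t' ≫ biprod.inr ≫ btil) ≫ m = t' ≫ ρ := by
        simp only [Category.assoc, hm₁, biprod.inr_snd_assoc]
      rw [Preadditive.add_comp, h2, ← ht']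
      abel
  -- (7) W := cone(m)
  obtain ⟨W, w, dW, hTW⟩ := distinguished_cocone_triangle m
  -- (8) all 𝒟 and approximation-cone maps into W vanish
  have hMem1 : (M⟦(1:ℤ)⟧) ∈ muInv 𝒴 (shiftSet 𝒟 (1:ℤ)) := by
    rw [muInv_shift_eq hD hct]; exact ⟨M, hM, ⟨Iso.refl _⟩⟩
  have hQW : ∀ Q : C, (Q ∈ 𝒟 ∨ IsApproxCone 𝒳 𝒟 Q) → ∀ f : Q ⟶ W, f = 0 := by
    intro Q hQ f
    have h1 : f ≫ dW = 0 := homZero_muInv hpair.1 hperp (hQN Q hQ) hMem1 _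
    obtain ⟨ψ, hψ⟩ : ∃ ψ : Q ⟶ Z, f = ψ ≫ w :=
      Triangle.coyoneda_exact₃ _ hTW f h1
    obtain ⟨ψ₂, hψ₂⟩ := hcover Q hQ ψ
    have h2 : m ≫ w = 0 := comp_distTriang_mor_zero₁₂ _ hTW
    rw [hψ, hψ₂, Category.assoc, h2, comp_zero]
  -- (9a) perpendicularity of W⟦-1⟧
  have hW1 : (W⟦(-1:ℤ)⟧) ∈ leftPerpShift 𝒟 := by
    rw [hperp]
    intro D' hD' g
    obtain ⟨g₀, hg₀⟩ := (shiftFunctor C (-1:ℤ)).map_surjective g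
    rw [← hg₀, hQW D' (Or.inl hD') g₀, Functor.map_zero]
  -- (9b) extension class membership of W⟦-1⟧
  obtain ⟨D_W, hD_W, ρW, hρW⟩ := hra (W⟦(-1:ℤ)⟧)
  obtain ⟨V, q, dV, hTV⟩ := distinguished_cocone_triangle ρW
  have hXV : ∀ X' ∈ 𝒳, ∀ f₂ : X' ⟶ V, f₂ = 0 := by
    intro X' hX' f₂
    have hdv : f₂ ≫ dV = 0 := hXperp hX' D_W hD_W _
    obtain ⟨f₃, hf₃⟩ : ∃ f₃ : X' ⟶ (W⟦(-1:ℤ)⟧), f₂ = f₃ ≫ q :=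
      Triangle.coyoneda_exact₃ _ hTV f₂ hdv
    obtain ⟨D₃, hD₃, a₃, ha₃⟩ := hla X'
    obtain ⟨Q₃, b₃, c₃, hT₃⟩ := distinguished_cocone_triangle a₃
    have hQ₃ : IsApproxCone 𝒳 𝒟 Q₃ := ⟨X', D₃, a₃, b₃, c₃, hX', hD₃, ha₃, hT₃⟩
    have hpre : (Triangle.mk a₃ b₃ c₃).invRotate.mor₁ ≫ f₃ = 0 := by
      have hz : ∀ gg : (Q₃⟦(-1:ℤ)⟧) ⟶ (W⟦(-1:ℤ)⟧), gg = 0 := by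
        intro gg
        obtain ⟨g₀, hg₀⟩ := (shiftFunctor C (-1:ℤ)).map_surjective gg
        rw [← hg₀, hQW Q₃ (Or.inr hQ₃) g₀, Functor.map_zero]
      exact hz _
    obtain ⟨h₃, hh₃⟩ : ∃ h₃ : D₃ ⟶ (W⟦(-1:ℤ)⟧), f₃ = a₃ ≫ h₃ :=
      Triangle.yoneda_exact₂ _ (inv_rot_of_distTriang _ hT₃) f₃ hpre
    obtain ⟨t₃, ht₃⟩ := hρW D₃ hD₃ h₃
    have hbot : ρW ≫ q = 0 := comp_distTriang_mor_zero₁₂ _ hTV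
    rw [hf₃, hh₃, ← ht₃, Category.assoc, Category.assoc, hbot, comp_zero, comp_zero]
  obtain ⟨X_v, Y_v, fv, gv, hv, hX_v, hY_v, hTv⟩ := hpair.2 V
  have hfv : fv = 0 := hXV X_v hX_v fv
  have hrot3 : (Triangle.mk fv gv hv).rotate.mor₃ = 0 := by
    change (-((fv)⟦(1:ℤ)⟧')) = 0; rw [hfv]; simp
  obtain ⟨eV, -, -⟩ := exists_iso_binaryBiproduct_of_distTriang _
    (rot_of_distTriang _ hTv) hrot3
  have hVY : V ∈ 𝒴 := (hY.mem_of_biprod (hY.mem_of_iso eV hY_v)).1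
  have hWm : (W⟦(-1:ℤ)⟧) ∈ muInv 𝒳 𝒟 := by
    refine ⟨⟨D_W, V, ρW, q, dV, hD_W, ?_, hTV⟩, hW1⟩
    rw [← hct]; exact hVY
  -- (10) membership of W
  have hWmem : W ∈ muInv 𝒴 (shiftSet 𝒟 (1:ℤ)) := by
    rw [muInv_shift_eq hD hct]
    exact ⟨W⟦(-1:ℤ)⟧, hWm, ⟨(shiftFunctorCompIsoId C (-1:ℤ) (1:ℤ) (by omega)).app W⟩⟩
  -- (11) conclusion
  exact ⟨M, W, m, w, dW, hM, hWmem, hTW⟩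

end Extension

/-- the `𝒟`-mutation of a cluster tilting torsion pair is again a
cluster tilting torsion pair. -/
theorem stmt13 (k : Type*) [Field k] [Linear k C]
    [∀ A B : C, Module.Finite k (A ⟶ B)] [IsIdempotentComplete C]
    (𝒳 𝒴 𝒟 : Set C) (hX : IsSubcat 𝒳) (hY : IsSubcat 𝒴) (hD : IsSubcat 𝒟)
    (hpair : IsTorsionPair 𝒳 𝒴)
    (hct : 𝒴 = shiftSet 𝒳 (1:ℤ))
    (hRF : RF 𝒟)
    (hDX : 𝒟 ⊆ 𝒳) (hXD : 𝒳 ⊆ shiftRightPerp 𝒟) :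
    IsTorsionPair (muInv 𝒳 𝒟) (muInv 𝒴 (shiftSet 𝒟 (1:ℤ))) ∧
    muInv 𝒴 (shiftSet 𝒟 (1:ℤ)) = shiftSet (muInv 𝒳 𝒟) (1:ℤ) := by
  obtain ⟨hla, hra, hrig, hperp⟩ := hRF
  exact ⟨⟨homZero_muInv hpair.1 hperp,
    ext_muInv hX hY hD hpair hct hla hra hrig hperp hDX hXD⟩, muInv_shift_eq hD hct⟩
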